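/- Let f : M → M be a continuous map on a compact metric space, φ : M → ℝ continuous, and ν a Gibbs measure for φ with constant P: there is ε₀ > 0 such that for 0 < ε < ε₀ there is K(ε) > 0 with K(ε)^{-1} ≤ ν(B(x,n,ε))·e^{nP − S_nφ(x)} ≤ K(ε) for all x and n. Suppose E ⊆ M is a set of points, each assigned a length m(x) ≥ N, such that the dynamical balls {B(x, m(x), ε/2) : x ∈ E} are pairwise disjoint and each B(x, m(x), ε) is contained in the set X_{I_δ, m(x)} = {y : (1/m(x))S_{m(x)}ψ(y) ∈ I_δ}. If ν(X_{I_δ,n}) ≤ e^{−(L−ζ)n} for all n ≥ N, then ∑_{x∈E} e^{−α·m(x) + S_{m(x)}φ(x)} ≤ K(ε)K(ε/2)·∑_{ℓ≥N} e^{(P−α−L+ζ)ℓ}, which is finite whenever α > P − L + ζ. -/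

import Mathlib

open Filter MeasureTheory

/-- the key counting estimate. For a Gibbs measure `ν` and a family `E` of
centers of pairwise disjoint dynamical balls contained in the sets `X_{I_δ,m(x)}`, whose
`ν`-measures decay exponentially with rate `L−ζ`, the weighted sum of
`e^{−α m(x) + S_{m(x)}φ(x)}` is bounded by `K(ε)K(ε/2) ∑_{ℓ≥N} e^{(P−α−L+ζ)ℓ}`,
finite whenever `α > P − L + ζ`. -/
theorem stmt6 {M : Type*} [MetricSpace M] [CompactSpace M] [MeasurableSpace M] [BorelSpace M]
    (f : M → M) (hf : Continuous f)
    (φ ψ : M → ℝ) (hφ : Continuous φ) (hψ : Continuous ψ)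
    (ν : Measure M) [IsFiniteMeasure ν]
    (P ε₀ : ℝ) (hε₀ : 0 < ε₀) (K : ℝ → ℝ)
    (hK : ∀ ε : ℝ, 0 < ε → ε < ε₀ → 0 < K ε)
    (hGibbs : ∀ ε : ℝ, 0 < ε → ε < ε₀ → ∀ x : M, ∀ n : ℕ,
      (K ε)⁻¹ * Real.exp (-(n : ℝ) * P + ∑ j ∈ Finset.range n, φ (f^[j] x)) ≤
          (ν {y | ∀ j < n, dist (f^[j] x) (f^[j] y) < ε}).toReal ∧
      (ν {y | ∀ j < n, dist (f^[j] x) (f^[j] y) < ε}).toReal ≤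
          K ε * Real.exp (-(n : ℝ) * P + ∑ j ∈ Finset.range n, φ (f^[j] x)))
    (Iδ : Set ℝ) (E : Set M) (m : M → ℕ) (N : ℕ) (L ζ α ε : ℝ)
    (hζ : 0 < ζ) (hε : 0 < ε) (hεε₀ : ε < ε₀)
    (hmN : ∀ x ∈ E, N ≤ m x)
    (hdisj : ∀ x ∈ E, ∀ y ∈ E, x ≠ y →
      Disjoint {z : M | ∀ j < m x, dist (f^[j] x) (f^[j] z) < ε / 2}
               {z : M | ∀ j < m y, dist (f^[j] y) (f^[j] z) < ε / 2})
    (hcontain : ∀ x ∈ E,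
      {z : M | ∀ j < m x, dist (f^[j] x) (f^[j] z) < ε} ⊆
      {y : M | (1 / (m x : ℝ)) * ∑ j ∈ Finset.range (m x), ψ (f^[j] y) ∈ Iδ})
    (hLD : ∀ n : ℕ, N ≤ n →
      (ν {y : M | (1 / (n : ℝ)) * ∑ j ∈ Finset.range n, ψ (f^[j] y) ∈ Iδ}).toReal ≤
        Real.exp (-(L - ζ) * n)) :
    (∑' x : E,
        ENNReal.ofReal (Real.exp (-α * (m (x : M)) +
          ∑ j ∈ Finset.range (m (x : M)), φ (f^[j] (x : M)))) ≤
      ENNReal.ofReal (K ε * K (ε / 2)) *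
        ∑' ℓ : {l : ℕ // N ≤ l}, ENNReal.ofReal (Real.exp ((P - α - L + ζ) * ((ℓ : ℕ) : ℝ)))) ∧
    (P - L + ζ < α →
      ∑' x : E,
        ENNReal.ofReal (Real.exp (-α * (m (x : M)) +
          ∑ j ∈ Finset.range (m (x : M)), φ (f^[j] (x : M)))) < ⊤) := by
  classical
  have hε2 : 0 < ε / 2 := by linarith
  have hε2ε₀ : ε / 2 < ε₀ := by linarith
  have hKε : 0 < K ε := hK ε hε hεε₀
  have hKε2 : 0 < K (ε / 2) := hK (ε / 2) hε2 hε2ε₀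
  set g : ↥E → ENNReal := fun x =>
    ENNReal.ofReal (Real.exp (-α * (m (x : M)) +
      ∑ j ∈ Finset.range (m (x : M)), φ (f^[j] (x : M)))) with hg
  rcases isEmpty_or_nonempty M with hM | hM
  · haveI : IsEmpty E := ⟨fun x => hM.elim x.1⟩
    have h0 : ∑' x : E, g x = 0 := by simp
    exact ⟨h0 ▸ zero_le, fun _ => h0 ▸ ENNReal.zero_lt_top⟩
  -- K ε ≥ 1
  have hK1 : 1 ≤ K ε := by
    obtain ⟨x0⟩ := hM
    have h := hGibbs ε hε hεε₀ x0 0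
    have h2 := le_trans h.1 h.2
    have hinv : (K ε)⁻¹ ≤ K ε :=
      le_of_mul_le_mul_right h2 (Real.exp_pos _)
    nlinarith [mul_inv_cancel₀ (ne_of_gt hKε)]
  -- dynamical balls are open
  have hopen : ∀ (x : M) (n : ℕ) (r : ℝ),
      IsOpen {z : M | ∀ j < n, dist (f^[j] x) (f^[j] z) < r} := by
    intro x n r
    have hset : {z : M | ∀ j < n, dist (f^[j] x) (f^[j] z) < r}
        = ⋂ j ∈ Finset.range n, {z : M | dist (f^[j] x) (f^[j] z) < r} := by
      ext z; simp [Finset.mem_range]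
    rw [hset]
    exact isOpen_biInter_finset fun j _ =>
      isOpen_lt (continuous_const.dist (hf.iterate j)) continuous_const
  -- key finite estimate per fiber
  have hfiber : ∀ ℓ : ℕ, N ≤ ℓ → ∀ F : Finset M, (↑F : Set M) ⊆ E → (∀ x ∈ F, m x = ℓ) →
      ∑ x ∈ F, Real.exp (-α * (ℓ : ℝ) + ∑ j ∈ Finset.range ℓ, φ (f^[j] x)) ≤
        K (ε / 2) * Real.exp ((P - α - L + ζ) * ℓ) := by
    intro ℓ hℓ F hFE hFm
    set B : M → Set M := fun x => {z : M | ∀ j < ℓ, dist (f^[j] x) (f^[j] z) < ε / 2} with hB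
    have hmeas : ∀ x, MeasurableSet (B x) := fun x => (hopen x ℓ (ε / 2)).measurableSet
    have hdisjF : (↑F : Set M).PairwiseDisjoint B := by
      intro x hx y hy hxy
      have h := hdisj x (hFE hx) y (hFE hy) hxy
      rwa [hFm x hx, hFm y hy] at h
    have hsub : ∀ x ∈ F, B x ⊆
        {y : M | (1 / (ℓ : ℝ)) * ∑ j ∈ Finset.range ℓ, ψ (f^[j] y) ∈ Iδ} := by
      intro x hx z hz
      have h1 := hcontain x (hFE hx)
      rw [hFm x hx] at h1
      exact h1 (fun j hj => lt_trans (hz j hj) (by linarith))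
    have hν : ∑ x ∈ F, (ν (B x)).toReal ≤ Real.exp (-(L - ζ) * ℓ) := by
      have h1 : ∑ x ∈ F, ν (B x) = ν (⋃ x ∈ F, B x) :=
        (measure_biUnion_finset hdisjF fun x _ => hmeas x).symm
      have h2 : ν (⋃ x ∈ F, B x) ≤
          ν {y : M | (1 / (ℓ : ℝ)) * ∑ j ∈ Finset.range ℓ, ψ (f^[j] y) ∈ Iδ} :=
        measure_mono (Set.iUnion₂_subset hsub)
      calc ∑ x ∈ F, (ν (B x)).toReal
          = (∑ x ∈ F, ν (B x)).toReal :=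
            (ENNReal.toReal_sum fun x _ => measure_ne_top ν _).symm
        _ ≤ (ν {y : M | (1 / (ℓ : ℝ)) * ∑ j ∈ Finset.range ℓ, ψ (f^[j] y) ∈ Iδ}).toReal :=
            ENNReal.toReal_mono (measure_ne_top ν _) (h1 ▸ h2)
        _ ≤ Real.exp (-(L - ζ) * ℓ) := hLD ℓ hℓ
    have hGx : ∀ x ∈ F,
        Real.exp (-(ℓ : ℝ) * P + ∑ j ∈ Finset.range ℓ, φ (f^[j] x)) ≤
          K (ε / 2) * (ν (B x)).toReal := by
      intro x hx
      have h := (hGibbs (ε / 2) hε2 hε2ε₀ x ℓ).1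
      calc Real.exp (-(ℓ : ℝ) * P + ∑ j ∈ Finset.range ℓ, φ (f^[j] x))
          = K (ε / 2) * ((K (ε / 2))⁻¹ *
              Real.exp (-(ℓ : ℝ) * P + ∑ j ∈ Finset.range ℓ, φ (f^[j] x))) := by
            field_simp
        _ ≤ K (ε / 2) * (ν (B x)).toReal :=
            mul_le_mul_of_nonneg_left h hKε2.le
    calc ∑ x ∈ F, Real.exp (-α * (ℓ : ℝ) + ∑ j ∈ Finset.range ℓ, φ (f^[j] x))
        = ∑ x ∈ F, Real.exp ((P - α) * ℓ) *
            Real.exp (-(ℓ : ℝ) * P + ∑ j ∈ Finset.range ℓ, φ (f^[j] x)) := by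
          refine Finset.sum_congr rfl fun x _ => ?_
          rw [← Real.exp_add]; ring_nf
      _ = Real.exp ((P - α) * ℓ) *
            ∑ x ∈ F, Real.exp (-(ℓ : ℝ) * P + ∑ j ∈ Finset.range ℓ, φ (f^[j] x)) := by
          rw [Finset.mul_sum]
      _ ≤ Real.exp ((P - α) * ℓ) * (K (ε / 2) * Real.exp (-(L - ζ) * ℓ)) := by
          refine mul_le_mul_of_nonneg_left ?_ (Real.exp_pos _).le
          calc ∑ x ∈ F, Real.exp (-(ℓ : ℝ) * P + ∑ j ∈ Finset.range ℓ, φ (f^[j] x))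
              ≤ ∑ x ∈ F, K (ε / 2) * (ν (B x)).toReal := Finset.sum_le_sum hGx
            _ = K (ε / 2) * ∑ x ∈ F, (ν (B x)).toReal := (Finset.mul_sum _ _ _).symm
            _ ≤ K (ε / 2) * Real.exp (-(L - ζ) * ℓ) :=
                mul_le_mul_of_nonneg_left hν hKε2.le
      _ = K (ε / 2) * Real.exp ((P - α - L + ζ) * ℓ) := by
          rw [show (P - α - L + ζ) * (ℓ : ℝ) = (P - α) * ℓ + -(L - ζ) * ℓ by ring,
            Real.exp_add]; ring
  -- fiber map
  set π : E → {l : ℕ // N ≤ l} := fun x => ⟨m (x : M), hmN (x : M) x.2⟩ with hπ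
  have hfib2 : ∀ ℓ : {l : ℕ // N ≤ l},
      ∑' x : π ⁻¹' {ℓ}, g (x : E) ≤
        ENNReal.ofReal (K (ε / 2)) *
          ENNReal.ofReal (Real.exp ((P - α - L + ζ) * ((ℓ : ℕ) : ℝ))) := by
    intro ℓ
    rw [ENNReal.tsum_eq_iSup_sum, ← ENNReal.ofReal_mul hKε2.le]
    refine iSup_le fun s => ?_
    set F : Finset M := s.image (fun x => x.1.1) with hFdef
    have hFE : (↑F : Set M) ⊆ E := by
      intro y hy
      rw [hFdef, Finset.coe_image] at hy
      obtain ⟨x, -, rfl⟩ := hy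
      exact x.1.2
    have hFm : ∀ y ∈ F, m y = (ℓ : ℕ) := by
      intro y hy
      rw [hFdef, Finset.mem_image] at hy
      obtain ⟨x, -, rfl⟩ := hy
      have hx : π x.1 = ℓ := x.2
      exact congrArg Subtype.val hx
    have hsum : (∑ y ∈ F, ENNReal.ofReal (Real.exp (-α * (m y : ℝ) +
          ∑ j ∈ Finset.range (m y), φ (f^[j] y)))) = ∑ x ∈ s, g x.1 := by
      rw [hFdef, Finset.sum_image
        (by intro a _ b _ hab; exact Subtype.ext (Subtype.ext hab))]
    rw [← hsum, ← ENNReal.ofReal_sum_of_nonneg fun _ _ => (Real.exp_pos _).le]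
    apply ENNReal.ofReal_le_ofReal
    calc ∑ y ∈ F, Real.exp (-α * (m y : ℝ) + ∑ j ∈ Finset.range (m y), φ (f^[j] y))
        = ∑ y ∈ F, Real.exp (-α * ((ℓ : ℕ) : ℝ) +
            ∑ j ∈ Finset.range (ℓ : ℕ), φ (f^[j] y)) := by
          refine Finset.sum_congr rfl fun y hy => ?_
          rw [hFm y hy]
      _ ≤ K (ε / 2) * Real.exp ((P - α - L + ζ) * ((ℓ : ℕ) : ℝ)) :=
          hfiber (ℓ : ℕ) ℓ.2 F hFE hFm
  have main : ∑' x : E, g x ≤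
      ENNReal.ofReal (K ε * K (ε / 2)) *
        ∑' ℓ : {l : ℕ // N ≤ l},
          ENNReal.ofReal (Real.exp ((P - α - L + ζ) * ((ℓ : ℕ) : ℝ))) := by
    rw [← ENNReal.tsum_fiberwise g π]
    calc ∑' ℓ : {l : ℕ // N ≤ l}, ∑' x : π ⁻¹' {ℓ}, g (x : E)
        ≤ ∑' ℓ : {l : ℕ // N ≤ l}, ENNReal.ofReal (K (ε / 2)) *
            ENNReal.ofReal (Real.exp ((P - α - L + ζ) * ((ℓ : ℕ) : ℝ))) :=
          ENNReal.tsum_le_tsum hfib2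
      _ = ENNReal.ofReal (K (ε / 2)) *
            ∑' ℓ : {l : ℕ // N ≤ l},
              ENNReal.ofReal (Real.exp ((P - α - L + ζ) * ((ℓ : ℕ) : ℝ))) :=
          ENNReal.tsum_mul_left
      _ ≤ ENNReal.ofReal (K ε * K (ε / 2)) *
            ∑' ℓ : {l : ℕ // N ≤ l},
              ENNReal.ofReal (Real.exp ((P - α - L + ζ) * ((ℓ : ℕ) : ℝ))) := by
          refine mul_le_mul_left (ENNReal.ofReal_le_ofReal ?_) _
          nlinarith
  refine ⟨main, fun hα => ?_⟩
  have hc : P - α - L + ζ < 0 := by linarith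
  have hsummable : Summable fun ℓ : ℕ => Real.exp ((P - α - L + ζ) * (ℓ : ℝ)) := by
    have h1 : Summable fun ℓ : ℕ => Real.exp (P - α - L + ζ) ^ ℓ :=
      summable_geometric_of_lt_one (Real.exp_pos _).le (Real.exp_lt_one_iff.mpr hc)
    refine h1.congr fun ℓ => ?_
    rw [← Real.exp_nat_mul, mul_comm]
  have hsub : Summable fun ℓ : {l : ℕ // N ≤ l} =>
      Real.exp ((P - α - L + ζ) * ((ℓ : ℕ) : ℝ)) :=
    hsummable.subtype _
  have hfin : (∑' ℓ : {l : ℕ // N ≤ l},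
      ENNReal.ofReal (Real.exp ((P - α - L + ζ) * ((ℓ : ℕ) : ℝ)))) < ⊤ := by
    rw [← ENNReal.ofReal_tsum_of_nonneg (fun _ => (Real.exp_pos _).le) hsub]
    exact ENNReal.ofReal_lt_top
  exact lt_of_le_of_lt main (ENNReal.mul_lt_top ENNReal.ofReal_lt_top hfin)
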